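/- Let V be a ℂ-vector space of dimension at least 2 and let n ≥ 3. Then the n-exterior algebra Λ(V,n) = T(V)/I(V,n) is infinite-dimensional over ℂ. (In contrast with the usual exterior algebra n = 2, the relations of order n ≥ 3 do not allow one to reorder generators, and for instance the images of the elements (e₁e₂)^k, k ≥ 0, for two linearly independent vectors e₁, e₂ are all linearly independent.) -/

import Mathlib

/-- Relation whose `RingQuot` is the `n`-exterior (Roby) algebra: every full
symmetrization `Σ_{σ∈S_n} v_{σ(1)} ⊗ ⋯ ⊗ v_{σ(n)}` is identified with `0`. -/
def symRel (V : Type*) [AddCommGroup V] [Module ℂ V] (n : ℕ) :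
    TensorAlgebra ℂ V → TensorAlgebra ℂ V → Prop :=
  fun a b => b = 0 ∧ ∃ v : Fin n → V,
    a = ∑ σ : Equiv.Perm (Fin n),
      (List.ofFn fun i => TensorAlgebra.ι ℂ (v (σ i))).prod

open Polynomial

section PolarizationLemmas

set_option maxHeartbeats 800000 in
lemma roby_sum_pow_expand {R : Type*} [Ring R] {ι : Type*} [Fintype ι] [DecidableEq ι]
    (w : ι → R) (m : ℕ) :
    (∑ i, w i) ^ m = ∑ f : Fin m → ι, (List.ofFn fun j => w (f j)).prod := by
  induction m with
  | zero => simp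
  | succ m ih =>
      have key : ∀ (p : ι × (Fin m → ι)),
          (List.ofFn fun j => w ((Fin.consEquiv fun _ => ι) p j)).prod
            = w p.1 * (List.ofFn fun j => w (p.2 j)).prod := by
        intro p
        rw [List.ofFn_succ]
        simp only [Fin.consEquiv_apply, Fin.cons_zero, Fin.cons_succ, List.prod_cons]
      calc (∑ i, w i) ^ (m + 1)
          = (∑ i, w i) * (∑ f : Fin m → ι, (List.ofFn fun j => w (f j)).prod) := by
            rw [pow_succ', ih]
        _ = ∑ p : ι × (Fin m → ι), w p.1 * (List.ofFn fun j => w (p.2 j)).prod := by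
            rw [Finset.sum_mul_sum, ← Finset.sum_product']
            rfl
        _ = ∑ f : Fin (m + 1) → ι, (List.ofFn fun j => w (f j)).prod :=
            Fintype.sum_equiv (Fin.consEquiv fun _ => ι) _ _
              (fun p => (key p).symm ▸ rfl)

lemma roby_inclusion_exclusion {R : Type*} [Ring R] {n : ℕ} (c : R) (f : Fin n → Fin n) :
    (∑ S : Finset (Fin n), (-1 : R) ^ (n - S.card) * if (∀ j, f j ∈ S) then c else 0)
      = if Function.Surjective f then c else 0 := by
  classical
  have hmap : ∀ S : Finset (Fin n), (∀ j, f j ∈ S) ↔ Finset.image f Finset.univ ⊆ S := by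
    intro S
    rw [Finset.image_subset_iff]
    simp
  set T := Finset.image f Finset.univ with hT
  have h1 : (∑ S : Finset (Fin n), (-1 : R) ^ (n - S.card) * if (∀ j, f j ∈ S) then c else 0)
      = ∑ S : Finset (Fin n), (-1 : R) ^ Sᶜ.card * if T ⊆ S then c else 0 := by
    refine Finset.sum_congr rfl fun S _ => ?_
    rw [Finset.card_compl]
    simp only [hmap S, Fintype.card_fin]
  rw [h1]
  have h2 : (∑ S : Finset (Fin n), (-1 : R) ^ Sᶜ.card * if T ⊆ S then c else 0)
      = ∑ S : Finset (Fin n), (-1 : R) ^ S.card * if S ⊆ Tᶜ then c else 0 := by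
    refine Fintype.sum_bijective compl (Function.Involutive.bijective compl_involutive)
      _ _ fun S => ?_
    simp [Finset.compl_subset_compl]
  rw [h2]
  have hpow : Finset.univ.filter (fun S => S ⊆ Tᶜ) = Tᶜ.powerset := by
    ext S; simp [Finset.mem_powerset]
  have h3 : (∑ S : Finset (Fin n), (-1 : R) ^ S.card * if S ⊆ Tᶜ then c else 0)
      = (∑ S ∈ Tᶜ.powerset, (-1 : R) ^ S.card) * c := by
    rw [Finset.sum_mul, ← hpow, Finset.sum_filter]
    refine Finset.sum_congr rfl fun S _ => ?_
    rw [mul_ite, mul_zero]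
  rw [h3]
  have h5 : (∑ S ∈ Tᶜ.powerset, (-1 : R) ^ S.card) = if Tᶜ = ∅ then 1 else 0 := by
    have h4 := Finset.sum_powerset_neg_one_pow_card (x := Tᶜ)
    have := congrArg (fun z : ℤ => (z : R)) h4
    push_cast at this
    simpa using this
  rw [h5]
  have h6 : (Tᶜ = ∅) ↔ Function.Surjective f := by
    rw [Finset.compl_eq_empty_iff]
    constructor
    · intro h y
      have : y ∈ T := h ▸ Finset.mem_univ y
      obtain ⟨x, -, hx⟩ := Finset.mem_image.mp this
      exact ⟨x, hx⟩
    · intro h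
      apply Finset.eq_univ_iff_forall.mpr
      intro y
      obtain ⟨x, hx⟩ := h y
      exact Finset.mem_image.mpr ⟨x, Finset.mem_univ x, hx⟩
  by_cases hs : Function.Surjective f
  · rw [if_pos (h6.mpr hs), if_pos hs, one_mul]
  · rw [if_neg (fun h => hs (h6.mp h)), if_neg hs, zero_mul]

lemma roby_polarization {R : Type*} [Ring R] (n : ℕ) (z : Fin n → R) :
    ∑ S : Finset (Fin n), (-1 : R) ^ (n - S.card) * (∑ i ∈ S, z i) ^ n
      = ∑ σ : Equiv.Perm (Fin n), (List.ofFn fun i => z (σ i)).prod := by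
  classical
  have hsub : ∀ S : Finset (Fin n), (∑ i ∈ S, z i) = ∑ i, if i ∈ S then z i else 0 := by
    intro S
    rw [Finset.sum_ite_mem, Finset.univ_inter]
  have hP : ∀ (S : Finset (Fin n)) (f : Fin n → Fin n),
      (List.ofFn fun j => if f j ∈ S then z (f j) else 0).prod
        = if (∀ j, f j ∈ S) then (List.ofFn fun j => z (f j)).prod else 0 := by
    intro S f
    by_cases h : ∀ j, f j ∈ S
    · rw [if_pos h]
      congr 1
      exact congrArg List.ofFn (funext fun j => if_pos (h j))
    · rw [if_neg h]
      push_neg at h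
      obtain ⟨j, hj⟩ := h
      apply List.prod_eq_zero
      rw [List.mem_ofFn]
      exact ⟨j, by simp [hj]⟩
  calc ∑ S : Finset (Fin n), (-1 : R) ^ (n - S.card) * (∑ i ∈ S, z i) ^ n
      = ∑ S : Finset (Fin n), ∑ f : Fin n → Fin n,
          (-1 : R) ^ (n - S.card) * if (∀ j, f j ∈ S) then (List.ofFn fun j => z (f j)).prod else 0 := by
        refine Finset.sum_congr rfl fun S _ => ?_
        rw [hsub S, roby_sum_pow_expand, Finset.mul_sum]
        exact Finset.sum_congr rfl fun f _ => by rw [hP S f]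
    _ = ∑ f : Fin n → Fin n, ∑ S : Finset (Fin n),
          (-1 : R) ^ (n - S.card) * if (∀ j, f j ∈ S) then (List.ofFn fun j => z (f j)).prod else 0 :=
        Finset.sum_comm
    _ = ∑ f : Fin n → Fin n,
          if Function.Surjective f then (List.ofFn fun j => z (f j)).prod else 0 := by
        exact Finset.sum_congr rfl fun f _ => roby_inclusion_exclusion _ f
    _ = ∑ f ∈ Finset.univ.filter (fun f : Fin n → Fin n => Function.Surjective f),
          (List.ofFn fun j => z (f j)).prod := (Finset.sum_filter _ _).symm
    _ = ∑ σ : Equiv.Perm (Fin n), (List.ofFn fun i => z (σ i)).prod := by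
        refine (Finset.sum_bij (fun (σ : Equiv.Perm (Fin n)) _ => (σ : Fin n → Fin n)) ?_ ?_ ?_ ?_).symm
        · intro σ _
          simp [Finset.mem_filter, σ.surjective]
        · intro σ₁ _ σ₂ _ h
          exact Equiv.coe_fn_injective h
        · intro f hf
          simp only [Finset.mem_filter, Finset.mem_univ, true_and] at hf
          have hb : Function.Bijective f := Finite.surjective_iff_bijective.mp hf
          exact ⟨Equiv.ofBijective f hb, Finset.mem_univ _, rfl⟩
        · intro σ _
          rfl

lemma roby_sym_eq_zero {R : Type*} [Ring R] {n : ℕ} (hn : 3 ≤ n) (z : Fin n → R)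
    (h3 : ∀ S : Finset (Fin n), (∑ i ∈ S, z i) ^ 3 = 0) :
    ∑ σ : Equiv.Perm (Fin n), (List.ofFn fun i => z (σ i)).prod = 0 := by
  rw [← roby_polarization]
  refine Finset.sum_eq_zero fun S _ => ?_
  have hzero : (∑ i ∈ S, z i) ^ n = 0 := by
    have heq : (∑ i ∈ S, z i) ^ n = (∑ i ∈ S, z i) ^ 3 * (∑ i ∈ S, z i) ^ (n - 3) := by
      rw [← pow_add]
      congr 1
      omega
    rw [heq, h3 S, zero_mul]
  rw [hzero, mul_zero]

end PolarizationLemmas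

noncomputable section RobyMatrices

abbrev RobyA : Type := Matrix (Fin 3) (Fin 3) (Polynomial ℂ)

def robyX : RobyA := Matrix.of ![![0, 1, 0], ![0, 0, 1], ![0, 0, 0]]
def robyY : RobyA := Matrix.of ![![0, 1, 0], ![X, 0, 1], ![0, -X, 0]]
def robyU : RobyA := Matrix.of ![![X, 0, 1], ![0, -X, 0], ![0, 0, 0]]

lemma roby_cube_zero {R : Type*} [CommRing R] (α γ : R) :
    (Matrix.of ![![0, α, 0], ![γ, 0, α], ![0, -γ, 0]]) ^ 3 = 0 := by
  ext i j
  fin_cases i <;> fin_cases j <;>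
    simp [pow_succ, Matrix.mul_apply, Fin.sum_univ_three] <;> ring

lemma roby_comb (a b : ℂ) :
    a • robyX + b • robyY
      = Matrix.of ![![0, C a + C b, 0], ![C b * X, 0, C a + C b], ![0, -(C b * X), 0]] := by
  ext i j
  fin_cases i <;> fin_cases j <;>
    simp [robyX, robyY, Matrix.smul_apply, smul_eq_C_mul, Matrix.vecHead, Matrix.vecTail]

lemma roby_comb_cube (a b : ℂ) : (a • robyX + b • robyY) ^ 3 = 0 := by
  rw [roby_comb]
  exact roby_cube_zero (R := ℂ[X]) (C a + C b) (C b * X)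

lemma roby_u : robyX * robyY = robyU := by
  ext i j
  fin_cases i <;> fin_cases j <;>
    simp [robyX, robyY, robyU, Matrix.mul_apply, Fin.sum_univ_three,
      Matrix.vecHead, Matrix.vecTail]

lemma roby_u_pow (k : ℕ) (i : Fin 3) :
    (robyU ^ k) i 0 = if i = 0 then X ^ k else 0 := by
  induction k with
  | zero => simp [Matrix.one_apply]
  | succ k ih =>
      have h0 : robyU 0 0 = X := rfl
      have h1 : robyU 1 0 = 0 := rfl
      have h2 : robyU 2 0 = 0 := rfl
      rw [pow_succ, Matrix.mul_apply, Fin.sum_univ_three, h0, h1, h2,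
        mul_zero, mul_zero, add_zero, add_zero, ih]
      by_cases hi : i = 0 <;> simp [hi, pow_succ]

/-- The `(0,0)` entry, as a `ℂ`-linear map. -/
def robyEntry : RobyA →ₗ[ℂ] Polynomial ℂ where
  toFun M := M 0 0
  map_add' _ _ := rfl
  map_smul' _ _ := rfl

lemma roby_X_pow_linearIndependent :
    LinearIndependent ℂ (fun k : ℕ => (X : ℂ[X]) ^ k) := by
  rw [linearIndependent_iff']
  intro t g hg k hk
  have h := congrArg (fun p : ℂ[X] => p.coeff k) hg
  simp only [Polynomial.finset_sum_coeff, Polynomial.coeff_smul, Polynomial.coeff_X_pow,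
    Polynomial.coeff_zero, smul_eq_mul, mul_ite, mul_one, mul_zero] at h
  rwa [Finset.sum_ite_eq t k g, if_pos hk] at h

end RobyMatrices

/-- If `dim V ≥ 2` and `n ≥ 3`, the `n`-exterior algebra
`Λ(V,n) = T(V)/I(V,n)` is infinite-dimensional over `ℂ`. -/
theorem roby_algebra_infinite_dimensional
    (V : Type*) [AddCommGroup V] [Module ℂ V]
    (hV : 2 ≤ Module.rank ℂ V) (n : ℕ) (hn : 3 ≤ n) :
    ¬ Module.Finite ℂ (RingQuot (symRel V n)) := by
  intro hfin
  haveI := hfin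
  classical
  -- extract two linearly independent vectors
  have h2 : ((2 : ℕ) : Cardinal) ≤ Module.rank ℂ V := by exact_mod_cast hV
  obtain ⟨s, hcard, hli⟩ := le_rank_iff_exists_linearIndependent_finset.mp h2
  obtain ⟨x₁, x₂, hne, rfl⟩ := Finset.card_eq_two.mp hcard
  replace hli : LinearIndepOn ℂ id ((({x₁, x₂} : Finset V) : Set V)) := hli
  -- dual functionals via an extended basis
  have hx₁s : x₁ ∈ ((({x₁, x₂} : Finset V) : Set V)) := by simp
  have hx₂s : x₂ ∈ ((({x₁, x₂} : Finset V) : Set V)) := by simp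
  have hx₁ : x₁ ∈ hli.extend (Set.subset_univ _) := hli.subset_extend _ hx₁s
  have hx₂ : x₂ ∈ hli.extend (Set.subset_univ _) := hli.subset_extend _ hx₂s
  set b := Module.Basis.extend hli with hb
  set i₁ : ↥(hli.extend (Set.subset_univ _)) := ⟨x₁, hx₁⟩ with hi₁
  set i₂ : ↥(hli.extend (Set.subset_univ _)) := ⟨x₂, hx₂⟩ with hi₂
  have hii : i₁ ≠ i₂ := fun h => hne (congrArg Subtype.val h)
  set f : V →ₗ[ℂ] ℂ := b.coord i₁ with hf
  set g : V →ₗ[ℂ] ℂ := b.coord i₂ with hg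
  have hb₁ : b i₁ = x₁ := Module.Basis.extend_apply_self hli i₁
  have hb₂ : b i₂ = x₂ := Module.Basis.extend_apply_self hli i₂
  have hrepr₁ : b.repr x₁ = Finsupp.single i₁ 1 := by
    have h := Module.Basis.repr_self (b := b) i₁
    rwa [hb₁] at h
  have hrepr₂ : b.repr x₂ = Finsupp.single i₂ 1 := by
    have h := Module.Basis.repr_self (b := b) i₂
    rwa [hb₂] at h
  have hf₁ : f x₁ = 1 := by
    rw [hf, Module.Basis.coord_apply, hrepr₁, Finsupp.single_eq_same]
  have hf₂ : f x₂ = 0 := by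
    rw [hf, Module.Basis.coord_apply, hrepr₂, Finsupp.single_apply, if_neg (Ne.symm hii)]
  have hg₁ : g x₁ = 0 := by
    rw [hg, Module.Basis.coord_apply, hrepr₁, Finsupp.single_apply, if_neg hii]
  have hg₂ : g x₂ = 1 := by
    rw [hg, Module.Basis.coord_apply, hrepr₂, Finsupp.single_eq_same]
  -- the linear map into the matrix algebra
  set φ : V →ₗ[ℂ] RobyA := f.smulRight robyX + g.smulRight robyY with hφ
  have hφ_apply : ∀ v : V, φ v = f v • robyX + g v • robyY := fun v => rfl
  have hφ₁ : φ x₁ = robyX := by rw [hφ_apply, hf₁, hg₁, one_smul, zero_smul, add_zero]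
  have hφ₂ : φ x₂ = robyY := by rw [hφ_apply, hf₂, hg₂, one_smul, zero_smul, zero_add]
  set Φ : TensorAlgebra ℂ V →ₐ[ℂ] RobyA := TensorAlgebra.lift ℂ φ with hΦ
  -- Φ kills the relation
  have hkill : ∀ ⦃x y : TensorAlgebra ℂ V⦄, symRel V n x y → Φ x = Φ y := by
    rintro x y ⟨rfl, v, rfl⟩
    rw [map_zero, map_sum]
    have hterm : ∀ σ : Equiv.Perm (Fin n),
        Φ ((List.ofFn fun i => TensorAlgebra.ι ℂ (v (σ i))).prod)
          = (List.ofFn fun i => φ (v (σ i))).prod := by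
      intro σ
      rw [map_list_prod, List.map_ofFn]
      congr 1
      exact congrArg List.ofFn (funext fun i => TensorAlgebra.lift_ι_apply φ (v (σ i)))
    rw [Finset.sum_congr rfl fun σ _ => hterm σ]
    refine roby_sym_eq_zero hn (fun i => φ (v i)) fun S => ?_
    rw [← map_sum φ v S, hφ_apply]
    exact roby_comb_cube _ _
  -- descend to the quotient
  set Ψ : RingQuot (symRel V n) →ₐ[ℂ] RobyA := RingQuot.liftAlgHom ℂ ⟨Φ, hkill⟩ with hΨ
  set t : RingQuot (symRel V n) :=
    RingQuot.mkAlgHom ℂ (symRel V n) (TensorAlgebra.ι ℂ x₁ * TensorAlgebra.ι ℂ x₂) with ht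
  have hΨt : Ψ t = robyU := by
    rw [ht, hΨ, RingQuot.liftAlgHom_mkAlgHom_apply, map_mul, TensorAlgebra.lift_ι_apply,
      TensorAlgebra.lift_ι_apply, hφ₁, hφ₂, roby_u]
  have hcomp : ∀ k : ℕ, (robyEntry ∘ₗ Ψ.toLinearMap) (t ^ k) = (X : ℂ[X]) ^ k := by
    intro k
    have : Ψ (t ^ k) = robyU ^ k := by rw [map_pow, hΨt]
    simp only [LinearMap.comp_apply, AlgHom.toLinearMap_apply, this]
    show (robyU ^ k) 0 0 = X ^ k
    rw [roby_u_pow, if_pos rfl]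
  have hli2 : LinearIndependent ℂ ((robyEntry ∘ₗ Ψ.toLinearMap) ∘ fun k : ℕ => t ^ k) := by
    have heq : ((robyEntry ∘ₗ Ψ.toLinearMap) ∘ fun k : ℕ => t ^ k)
        = fun k : ℕ => (X : ℂ[X]) ^ k := funext fun k => hcomp k
    rw [heq]
    exact roby_X_pow_linearIndependent
  have hli3 : LinearIndependent ℂ (fun k : ℕ => t ^ k) :=
    LinearIndependent.of_comp _ hli2
  exact Module.Finite.not_linearIndependent_of_infinite _ hli3
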